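/- In the discrete-time square-integrable model, the quadratic coefficient of the mean-variance hedging value function satisfies the backward recursion Y_{k−1} = E[Y_k | F_{k−1}] − (E[Y_k Δ_k S | F_{k−1}])² / E[Y_k (Δ_k S)² | F_{k−1}], with terminal condition Y_T = 1, where Δ_k S = S_k − S_{k−1}. -/

import Mathlib

open MeasureTheory

variable {Ω : Type*} {m : MeasurableSpace Ω}

/-- Admissible discrete-time strategies: predictable and with square-integrable
one-period gains `ϑ_j Δ_j S`. -/
def AdmissibleDiscrete (μ : Measure Ω) (F : Filtration ℕ m)
    (S : ℕ → Ω → ℝ) (ϑ : ℕ → Ω → ℝ) : Prop :=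
  (∀ j, 1 ≤ j → StronglyMeasurable[F (j - 1)] (ϑ j)) ∧
  (∀ j, MemLp (fun ω => ϑ j ω * (S j ω - S (j - 1) ω)) 2 μ)

/-- The gains `∑_{j=k+1}^T ϑ_j Δ_j S` of a strategy from time `k` to the horizon `T`. -/
def gains (S : ℕ → Ω → ℝ) (T k : ℕ) (ϑ : ℕ → Ω → ℝ) (ω : Ω) : ℝ :=
  ∑ j ∈ Finset.Ioc k T, ϑ j ω * (S j ω - S (j - 1) ω)

section AuxMVH

variable {μ : Measure Ω} [IsProbabilityMeasure μ]

lemma aux_quad_ineq (a b c t : ℝ) (hc : 0 ≤ c) (hbc : c = 0 → b = 0) :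
    a - b ^ 2 / c ≤ a + 2 * t * b + t ^ 2 * c := by
  rcases eq_or_lt_of_le hc with h | h
  · simp [← h, hbc h.symm, sq_nonneg t, mul_nonneg (sq_nonneg t) hc]
  · have h2 : c ≠ 0 := h.ne'
    have h1 : 0 ≤ c * (t + b / c) ^ 2 := mul_nonneg h.le (sq_nonneg _)
    have key : a + 2 * t * b + t ^ 2 * c - (a - b ^ 2 / c) = c * (t + b / c) ^ 2 := by
      field_simp; ring
    linarith

lemma aux_quad_eq (a b c : ℝ) (hc : 0 ≤ c) (hbc : c = 0 → b = 0) :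
    a + 2 * (-(b / c)) * b + (-(b / c)) ^ 2 * c = a - b ^ 2 / c := by
  rcases eq_or_lt_of_le hc with h | h
  · simp [← h, hbc h.symm]
  · have h2 : c ≠ 0 := h.ne'
    field_simp
    ring

lemma aux_b_zero (a b c : ℝ)
    (h : ∀ n : ℕ, 0 ≤ a + 2 * n * b + n ^ 2 * c ∧ 0 ≤ a + 2 * (-(n : ℝ)) * b + (-(n : ℝ)) ^ 2 * c)
    (hc : c = 0) : b = 0 := by
  by_contra hb
  obtain ⟨n, hn⟩ := exists_nat_gt (a / (2 * |b|))
  have hbpos : 0 < |b| := abs_pos.mpr hb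
  have h1 := (h n).1
  have h2 := (h n).2
  rw [hc] at h1 h2
  have hab : 2 * n * |b| ≤ a := by
    rcases abs_cases b with ⟨hb1, _⟩ | ⟨hb1, _⟩ <;> nlinarith
  have := (div_lt_iff₀ (by positivity)).mp hn
  linarith


/-- Pull-out computation: `E[Y (1 + ξΔ)² | mF] = E[Y|mF] + 2ξ E[YΔ|mF] + ξ² E[YΔ²|mF]`
for `mF`-measurable `ξ` with `ξΔ ∈ L²`, where `0 ≤ Y ≤ 1` a.e. -/
lemma aux_condExp_quad {mF : MeasurableSpace Ω} (hmF : mF ≤ m)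
    {Y Δ ξ : Ω → ℝ} (hYm : AEStronglyMeasurable[m] Y μ)
    (hYb : ∀ᵐ ω ∂μ, 0 ≤ Y ω ∧ Y ω ≤ 1)
    (hΔ2 : MemLp Δ 2 μ) (hξ : StronglyMeasurable[mF] ξ)
    (hξΔ : MemLp (fun ω => ξ ω * Δ ω) 2 μ) :
    μ[fun ω => Y ω * (1 + ξ ω * Δ ω) ^ 2 | mF] =ᵐ[μ] fun ω =>
      (μ[Y | mF]) ω + 2 * ξ ω * (μ[fun ω' => Y ω' * Δ ω' | mF]) ω
        + ξ ω ^ 2 * (μ[fun ω' => Y ω' * Δ ω' ^ 2 | mF]) ω := by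
  have hΔint : Integrable Δ μ := hΔ2.integrable one_le_two
  have hYint : Integrable Y μ := by
    refine Integrable.mono' (integrable_const 1) hYm ?_
    filter_upwards [hYb] with ω ⟨h0, h1⟩
    rw [Real.norm_eq_abs, abs_of_nonneg h0]; exact h1
  have hYΔint : Integrable (fun ω => Y ω * Δ ω) μ := by
    refine Integrable.mono' hΔint.abs (hYm.mul hΔ2.aestronglyMeasurable) ?_
    filter_upwards [hYb] with ω ⟨h0, h1⟩
    rw [Real.norm_eq_abs, abs_mul]
    exact mul_le_of_le_one_left (abs_nonneg _) (abs_le.mpr ⟨by linarith, h1⟩)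
  have hYΔ2int : Integrable (fun ω => Y ω * Δ ω ^ 2) μ := by
    have hΔsq : AEStronglyMeasurable[m] (fun ω => Δ ω ^ 2) μ :=
      (hΔ2.aestronglyMeasurable.mul hΔ2.aestronglyMeasurable).congr
        (Filter.Eventually.of_forall fun ω => (pow_two (Δ ω)).symm)
    refine Integrable.mono' hΔ2.integrable_sq (hYm.mul hΔsq) ?_
    filter_upwards [hYb] with ω ⟨h0, h1⟩
    rw [Real.norm_eq_abs, abs_mul, abs_of_nonneg (sq_nonneg (Δ ω))]
    exact mul_le_of_le_one_left (sq_nonneg _) (abs_le.mpr ⟨by linarith, h1⟩)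
  -- the two middle/last integrands
  set g₂ : Ω → ℝ := fun ω => 2 * (Y ω * Δ ω) with hg₂
  set g₃ : Ω → ℝ := fun ω => Y ω * Δ ω ^ 2 with hg₃
  have hg₂int : Integrable g₂ μ := hYΔint.const_mul 2
  have hξg₂int : Integrable (ξ * g₂) μ := by
    refine Integrable.mono' ((hξΔ.integrable one_le_two).abs.const_mul 2)
      (((hξ.mono hmF).aestronglyMeasurable).mul hg₂int.1) ?_
    filter_upwards [hYb] with ω ⟨h0, h1⟩
    simp only [Pi.mul_apply, hg₂, Real.norm_eq_abs]
    rw [show ξ ω * (2 * (Y ω * Δ ω)) = Y ω * (2 * (ξ ω * Δ ω)) from by ring, abs_mul,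
      abs_of_nonneg h0, abs_mul, abs_of_nonneg (by norm_num : (0:ℝ) ≤ 2)]
    exact mul_le_of_le_one_left (by positivity) h1
  have hξ2 : StronglyMeasurable[mF] (ξ * ξ) := hξ.mul hξ
  have hξ2g₃int : Integrable ((ξ * ξ) * g₃) μ := by
    refine Integrable.mono' hξΔ.integrable_sq
      ((((hξ.mono hmF).aestronglyMeasurable).mul ((hξ.mono hmF).aestronglyMeasurable)).mul
        hYΔ2int.1) ?_
    filter_upwards [hYb] with ω ⟨h0, h1⟩
    simp only [Pi.mul_apply, hg₃, Real.norm_eq_abs]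
    rw [show ξ ω * ξ ω * (Y ω * Δ ω ^ 2) = Y ω * (ξ ω * Δ ω) ^ 2 from by ring, abs_mul,
      abs_of_nonneg h0, abs_of_nonneg (sq_nonneg (ξ ω * Δ ω))]
    exact mul_le_of_le_one_left (sq_nonneg _) h1
  have hdecomp : (fun ω => Y ω * (1 + ξ ω * Δ ω) ^ 2) = Y + (ξ * g₂ + (ξ * ξ) * g₃) := by
    funext ω
    simp only [Pi.add_apply, Pi.mul_apply, hg₂, hg₃]
    ring
  rw [hdecomp]
  refine (condExp_add hYint (hξg₂int.add hξ2g₃int) _).trans ?_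
  have h2 : μ[ξ * g₂ + (ξ * ξ) * g₃ | mF] =ᵐ[μ] μ[ξ * g₂ | mF] + μ[(ξ * ξ) * g₃ | mF] :=
    condExp_add hξg₂int hξ2g₃int _
  have h3 : μ[ξ * g₂ | mF] =ᵐ[μ] ξ * μ[g₂ | mF] :=
    condExp_mul_of_stronglyMeasurable_left hξ hξg₂int hg₂int
  have h4 : μ[(ξ * ξ) * g₃ | mF] =ᵐ[μ] (ξ * ξ) * μ[g₃ | mF] :=
    condExp_mul_of_stronglyMeasurable_left hξ2 hξ2g₃int hYΔ2int
  have h5 : μ[g₂ | mF] =ᵐ[μ] (2:ℝ) • μ[fun ω' => Y ω' * Δ ω' | mF] := by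
    have : g₂ = (2:ℝ) • (fun ω' => Y ω' * Δ ω') := by funext ω; simp only [Pi.smul_apply, smul_eq_mul, hg₂]
    rw [this]; exact condExp_smul 2 _ _
  filter_upwards [h2, h3, h4, h5] with ω h2 h3 h4 h5
  simp only [Pi.add_apply, Pi.mul_apply, Pi.smul_apply, smul_eq_mul] at h2 h3 h4 h5 ⊢
  rw [h2, h3, h4, h5]
  ring


lemma gains_memℒp (μ : Measure Ω) [IsProbabilityMeasure μ] (F : Filtration ℕ m)
    (S : ℕ → Ω → ℝ) (T k : ℕ) (ϑ : ℕ → Ω → ℝ) (hϑ : AdmissibleDiscrete μ F S ϑ) :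
    MemLp (fun ω => 1 + gains S T k ϑ ω) 2 μ := by
  have h : MemLp (fun ω => gains S T k ϑ ω) 2 μ := by
    have h0 := memLp_finset_sum' (μ := μ) (p := 2) (Finset.Ioc k T)
      (f := fun j ω => ϑ j ω * (S j ω - S (j - 1) ω)) (fun j _ => hϑ.2 j)
    exact h0.ae_eq (Filter.Eventually.of_forall fun ω => by
      simp [gains, Finset.sum_apply])
  exact (memLp_const (1:ℝ)).add h

lemma gains_decomp (S : ℕ → Ω → ℝ) (T k : ℕ) (hk1 : 1 ≤ k) (hkT : k ≤ T)
    (ϑ : ℕ → Ω → ℝ) (ω : Ω) :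
    gains S T (k - 1) ϑ ω = ϑ k ω * (S k ω - S (k - 1) ω) + gains S T k ϑ ω := by
  unfold gains
  have h : Finset.Ioc (k - 1) T = insert k (Finset.Ioc k T) := by
    ext j; simp only [Finset.mem_Ioc, Finset.mem_insert]; omega
  rw [h, Finset.sum_insert (by simp)]

lemma aux_inner (μ : Measure Ω) [IsProbabilityMeasure μ] (F : Filtration ℕ m) (T k : ℕ)
    (hk1 : 1 ≤ k) (hkT : k ≤ T) (S : ℕ → Ω → ℝ)
    (hSadapt : ∀ j, StronglyMeasurable[F j] (S j))
    (Y : Ω → ℝ)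
    (hYle : ∀ ϑ, AdmissibleDiscrete μ F S ϑ →
      Y ≤ᵐ[μ] μ[fun ω => (1 + gains S T k ϑ ω) ^ 2 | F k])
    (hY0 : 0 ≤ᵐ[μ] Y)
    (ϑ : ℕ → Ω → ℝ) (hϑ : AdmissibleDiscrete μ F S ϑ) :
    ∀ᵐ ω ∂μ, (1 + ϑ k ω * (S k ω - S (k - 1) ω)) ^ 2 * Y ω ≤
      (μ[fun ω' => (1 + gains S T (k - 1) ϑ ω') ^ 2 | F k]) ω := by
  classical
  set Δ : Ω → ℝ := fun ω => S k ω - S (k - 1) ω with hΔdef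
  set c : Ω → ℝ := fun ω => 1 + ϑ k ω * Δ ω with hcdef
  set G : Ω → ℝ := fun ω => gains S T k ϑ ω with hGdef
  have hcmeas : StronglyMeasurable[F k] c := by
    apply stronglyMeasurable_const.add
    exact ((hϑ.1 k hk1).mono (F.mono (Nat.sub_le k 1))).mul
      ((hSadapt k).sub ((hSadapt (k - 1)).mono (F.mono (Nat.sub_le k 1))))
  have hcM : Measurable[F k] c := hcmeas.measurable
  have hq2 : MemLp (fun ω => 1 + gains S T (k - 1) ϑ ω) 2 μ := gains_memℒp μ F S T (k - 1) ϑ hϑ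
  have hqint : Integrable (fun ω => (1 + gains S T (k - 1) ϑ ω) ^ 2) μ := hq2.integrable_sq
  have hcG : ∀ ω, 1 + gains S T (k - 1) ϑ ω = c ω + G ω := fun ω => by
    rw [gains_decomp S T k hk1 hkT ϑ ω]; simp only [hcdef, hGdef, hΔdef]; ring
  have hqnn : 0 ≤ᵐ[μ] μ[fun ω' => (1 + gains S T (k - 1) ϑ ω') ^ 2 | F k] :=
    condExp_nonneg (Filter.Eventually.of_forall fun ω => sq_nonneg _)
  have key : ∀ n : ℕ, ∀ᵐ ω ∂μ,
      (if ((n : ℝ) + 1)⁻¹ ≤ |c ω| then c ω ^ 2 else 0) * Y ω ≤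
      (μ[fun ω' => (1 + gains S T (k - 1) ϑ ω') ^ 2 | F k]) ω := by
    intro n
    set gn : Ω → ℝ := fun ω => if ((n : ℝ) + 1)⁻¹ ≤ |c ω| then (c ω)⁻¹ else 0 with hgndef
    set In : Ω → ℝ := fun ω => if ((n : ℝ) + 1)⁻¹ ≤ |c ω| then c ω ^ 2 else 0 with hIndef
    have hsetm : MeasurableSet[F k] {ω | ((n : ℝ) + 1)⁻¹ ≤ |c ω|} :=
      measurableSet_le (measurable_const : Measurable[F k] _) (continuous_abs.measurable.comp hcM)
    have hgnm : StronglyMeasurable[F k] gn :=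
      (Measurable.ite hsetm (measurable_inv.comp hcM) measurable_const).stronglyMeasurable
    have hc2M : Measurable[F k] fun ω => c ω ^ 2 := by
      have heq : (fun ω => c ω ^ 2) = fun ω => c ω * c ω := by funext ω; ring
      rw [heq]; exact hcM.mul hcM
    have hInm : StronglyMeasurable[F k] In :=
      (Measurable.ite hsetm hc2M measurable_const).stronglyMeasurable
    have hgnbd : ∀ ω, |gn ω| ≤ (n : ℝ) + 1 := by
      intro ω
      simp only [hgndef]
      split_ifs with h
      · rw [abs_inv]
        calc |c ω|⁻¹ ≤ (((n : ℝ) + 1)⁻¹)⁻¹ := by gcongr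
          _ = (n : ℝ) + 1 := inv_inv _
      · simp only [abs_zero]; positivity
    set ϑ' : ℕ → Ω → ℝ := fun j ω => if k < j then gn ω * ϑ j ω else 0 with hϑ'def
    have hϑ'adm : AdmissibleDiscrete μ F S ϑ' := by
      constructor
      · intro j hj
        by_cases hkj : k < j
        · simp only [hϑ'def, if_pos hkj]
          exact (hgnm.mono (F.mono (by omega : k ≤ j - 1))).mul (hϑ.1 j hj)
        · simp only [hϑ'def, if_neg hkj]
          exact stronglyMeasurable_const
      · intro j
        by_cases hkj : k < j
        · have h1 : MemLp gn ⊤ μ := memLp_top_of_bound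
            ((hgnm.mono (F.le k)).aestronglyMeasurable) ((n : ℝ) + 1)
            (Filter.Eventually.of_forall fun ω => by rw [Real.norm_eq_abs]; exact hgnbd ω)
          have h2 := (hϑ.2 j).smul (r := 2) h1
          apply h2.ae_eq
          filter_upwards with ω
          simp only [hϑ'def, if_pos hkj, Pi.smul_apply, smul_eq_mul, Pi.mul_apply]
          ring
        · apply (memLp_const (0 : ℝ)).ae_eq
          filter_upwards with ω
          simp [hϑ'def, if_neg hkj]
    have hgains' : ∀ ω, gains S T k ϑ' ω = gn ω * G ω := by
      intro ω
      simp only [hGdef, gains, Finset.mul_sum]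
      apply Finset.sum_congr rfl
      intro j hj
      rw [Finset.mem_Ioc] at hj
      simp only [hϑ'def, if_pos hj.1]
      ring
    have hEn := hYle ϑ' hϑ'adm
    have hptwise : ∀ ω, In ω * (1 + gains S T k ϑ' ω) ^ 2 =
        (if ((n : ℝ) + 1)⁻¹ ≤ |c ω| then (c ω + G ω) ^ 2 else 0) := by
      intro ω
      rw [hgains' ω]
      simp only [hIndef, hgndef]
      split_ifs with h
      · have hc0 : c ω ≠ 0 := by
          intro h0
          rw [h0] at h
          simp only [abs_zero] at h
          have : (0 : ℝ) < ((n : ℝ) + 1)⁻¹ := by positivity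
          linarith
        have expand : c ω ^ 2 * (1 + (c ω)⁻¹ * G ω) ^ 2
            = (c ω * (1 + (c ω)⁻¹ * G ω)) ^ 2 := by ring
        rw [expand]
        congr 1
        field_simp
      · simp
    have hbound : ∀ ω, In ω * (1 + gains S T k ϑ' ω) ^ 2 ≤ (1 + gains S T (k - 1) ϑ ω) ^ 2 := by
      intro ω
      rw [hptwise ω, hcG ω]
      split_ifs with h
      · exact le_rfl
      · positivity
    have hIg_nonneg : ∀ ω, 0 ≤ In ω * (1 + gains S T k ϑ' ω) ^ 2 := by
      intro ω
      apply mul_nonneg _ (sq_nonneg _)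
      simp only [hIndef]
      split_ifs
      · exact sq_nonneg _
      · exact le_rfl
    have hgϑ'int : Integrable (fun ω => (1 + gains S T k ϑ' ω) ^ 2) μ :=
      (gains_memℒp μ F S T k ϑ' hϑ'adm).integrable_sq
    have hIgint : Integrable (fun ω => In ω * (1 + gains S T k ϑ' ω) ^ 2) μ := by
      refine Integrable.mono' hqint
        (((hInm.mono (F.le k)).aestronglyMeasurable).mul hgϑ'int.1) ?_
      filter_upwards with ω
      rw [Real.norm_eq_abs, abs_of_nonneg (hIg_nonneg ω)]
      exact hbound ω
    have hpull : μ[In * fun ω => (1 + gains S T k ϑ' ω) ^ 2 | F k]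
        =ᵐ[μ] In * μ[fun ω => (1 + gains S T k ϑ' ω) ^ 2 | F k] :=
      condExp_mul_of_stronglyMeasurable_left hInm (by
        apply hIgint.congr; filter_upwards with ω; rfl) hgϑ'int
    have hmono : μ[In * fun ω => (1 + gains S T k ϑ' ω) ^ 2 | F k]
        ≤ᵐ[μ] μ[fun ω' => (1 + gains S T (k - 1) ϑ ω') ^ 2 | F k] := by
      apply condExp_mono (by
        apply hIgint.congr; filter_upwards with ω; rfl) hqint
      filter_upwards with ω
      exact hbound ω
    filter_upwards [hEn, hpull, hmono, hY0] with ω hEnω hpullω hmonoω hY0ω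
    have hpullω' : (μ[In * fun ω' => (1 + gains S T k ϑ' ω') ^ 2 | F k]) ω
        = In ω * (μ[fun ω' => (1 + gains S T k ϑ' ω') ^ 2 | F k]) ω := by
      rw [hpullω]; rfl
    calc In ω * Y ω ≤ In ω * (μ[fun ω' => (1 + gains S T k ϑ' ω') ^ 2 | F k]) ω := by
          apply mul_le_mul_of_nonneg_left hEnω
          simp only [hIndef]
          split_ifs
          · exact sq_nonneg _
          · exact le_rfl
      _ = (μ[In * fun ω' => (1 + gains S T k ϑ' ω') ^ 2 | F k]) ω := hpullω'.symm
      _ ≤ _ := hmonoω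
  filter_upwards [ae_all_iff.mpr key, hqnn, hY0] with ω hkey hnn hY0ω
  show c ω ^ 2 * Y ω ≤ _
  by_cases hc : c ω = 0
  · rw [hc]
    simpa using hnn
  · obtain ⟨n, hn⟩ := exists_nat_one_div_lt (abs_pos.mpr hc)
    have := hkey n
    rw [if_pos (le_of_lt (by rwa [one_div] at hn))] at this
    exact this

lemma aux_CS {mF : MeasurableSpace Ω} (hmF : mF ≤ m)
    {Yk Δ : Ω → ℝ} (hYm : AEStronglyMeasurable[m] Yk μ)
    (hYb : ∀ᵐ ω ∂μ, 0 ≤ Yk ω ∧ Yk ω ≤ 1) (hΔ2 : MemLp Δ 2 μ) :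
    ∀ᵐ ω ∂μ, 0 ≤ (μ[fun ω' => Yk ω' * Δ ω' ^ 2 | mF]) ω ∧
      ((μ[fun ω' => Yk ω' * Δ ω' ^ 2 | mF]) ω = 0 →
        (μ[fun ω' => Yk ω' * Δ ω' | mF]) ω = 0) := by
  have hC0 : 0 ≤ᵐ[μ] μ[fun ω' => Yk ω' * Δ ω' ^ 2 | mF] := by
    apply condExp_nonneg
    filter_upwards [hYb] with ω ⟨h0, _⟩
    exact mul_nonneg h0 (sq_nonneg _)
  have hq : ∀ q : ℤ, ∀ᵐ ω ∂μ,
      0 ≤ (μ[Yk | mF]) ω + 2 * (q : ℝ) * (μ[fun ω' => Yk ω' * Δ ω' | mF]) ω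
        + (q : ℝ) ^ 2 * (μ[fun ω' => Yk ω' * Δ ω' ^ 2 | mF]) ω := by
    intro q
    have hξΔ : MemLp (fun ω => (q : ℝ) * Δ ω) 2 μ := hΔ2.const_mul _
    have hquad := aux_condExp_quad hmF hYm hYb hΔ2
      (stronglyMeasurable_const : StronglyMeasurable[mF] fun _ => (q : ℝ)) hξΔ
    have hnn : 0 ≤ᵐ[μ] μ[fun ω => Yk ω * (1 + (q : ℝ) * Δ ω) ^ 2 | mF] := by
      apply condExp_nonneg
      filter_upwards [hYb] with ω ⟨h0, _⟩
      exact mul_nonneg h0 (sq_nonneg _)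
    filter_upwards [hquad, hnn] with ω h1 h2
    rw [h1] at h2
    exact h2
  filter_upwards [ae_all_iff.mpr hq, hC0] with ω hqω hC0ω
  refine ⟨hC0ω, fun hC => ?_⟩
  apply aux_b_zero ((μ[Yk | mF]) ω) _ _ _ hC
  intro n
  constructor
  · have := hqω (n : ℤ)
    push_cast at this
    exact this
  · have := hqω (-(n : ℤ))
    push_cast at this
    exact this

lemma aux_lower (μ : Measure Ω) [IsProbabilityMeasure μ] (F : Filtration ℕ m) (T k : ℕ)
    (hk1 : 1 ≤ k) (hkT : k ≤ T) (S : ℕ → Ω → ℝ)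
    (hSadapt : ∀ j, StronglyMeasurable[F j] (S j))
    (Yk : Ω → ℝ) (hYm : AEStronglyMeasurable Yk μ)
    (hYb : ∀ᵐ ω ∂μ, 0 ≤ Yk ω ∧ Yk ω ≤ 1)
    (hΔ2 : MemLp (fun ω => S k ω - S (k - 1) ω) 2 μ)
    (hYle : ∀ ϑ, AdmissibleDiscrete μ F S ϑ →
      Yk ≤ᵐ[μ] μ[fun ω => (1 + gains S T k ϑ ω) ^ 2 | F k])
    (ϑ : ℕ → Ω → ℝ) (hϑ : AdmissibleDiscrete μ F S ϑ) :
    ∀ᵐ ω ∂μ,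
      (μ[Yk | F (k - 1)]) ω
        - ((μ[fun ω' => Yk ω' * (S k ω' - S (k - 1) ω') | F (k - 1)]) ω) ^ 2 /
          (μ[fun ω' => Yk ω' * (S k ω' - S (k - 1) ω') ^ 2 | F (k - 1)]) ω ≤
      (μ[fun ω' => (1 + gains S T (k - 1) ϑ ω') ^ 2 | F (k - 1)]) ω := by
  have hinner := aux_inner μ F T k hk1 hkT S hSadapt Yk hYle
    (by filter_upwards [hYb] with ω h; exact h.1) ϑ hϑ
  have hc2 : MemLp (fun ω => 1 + ϑ k ω * (S k ω - S (k - 1) ω)) 2 μ :=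
    (memLp_const (1:ℝ)).add (hϑ.2 k)
  have hcc : Integrable (fun ω => Yk ω * (1 + ϑ k ω * (S k ω - S (k - 1) ω)) ^ 2) μ := by
    have hsq : AEStronglyMeasurable (fun ω => (1 + ϑ k ω * (S k ω - S (k - 1) ω)) ^ 2) μ :=
      (hc2.aestronglyMeasurable.mul hc2.aestronglyMeasurable).congr
        (Filter.Eventually.of_forall fun ω => (pow_two _).symm)
    refine Integrable.mono' hc2.integrable_sq (hYm.mul hsq) ?_
    filter_upwards [hYb] with ω ⟨h0, h1⟩
    rw [Real.norm_eq_abs, abs_mul, abs_of_nonneg h0, abs_of_nonneg (sq_nonneg _)]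
    exact mul_le_of_le_one_left (sq_nonneg _) h1
  have hmono : μ[fun ω => Yk ω * (1 + ϑ k ω * (S k ω - S (k - 1) ω)) ^ 2 | F (k - 1)]
      ≤ᵐ[μ] μ[μ[fun ω' => (1 + gains S T (k - 1) ϑ ω') ^ 2 | F k] | F (k - 1)] := by
    apply condExp_mono hcc integrable_condExp
    filter_upwards [hinner] with ω hω
    calc Yk ω * (1 + ϑ k ω * (S k ω - S (k - 1) ω)) ^ 2
        = (1 + ϑ k ω * (S k ω - S (k - 1) ω)) ^ 2 * Yk ω := by ring
      _ ≤ _ := hω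
  have htower : μ[μ[fun ω' => (1 + gains S T (k - 1) ϑ ω') ^ 2 | F k] | F (k - 1)]
      =ᵐ[μ] μ[fun ω' => (1 + gains S T (k - 1) ϑ ω') ^ 2 | F (k - 1)] :=
    condExp_condExp_of_le (F.mono (Nat.sub_le k 1)) (F.le k)
  have hquad := aux_condExp_quad (F.le (k - 1)) hYm hYb hΔ2 (hϑ.1 k hk1) (hϑ.2 k)
  have hcs := aux_CS (F.le (k - 1)) hYm hYb hΔ2
  filter_upwards [hmono, htower, hquad, hcs] with ω h1 h2 h3 h4
  rw [← h2]
  calc (μ[Yk | F (k - 1)]) ω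
      - ((μ[fun ω' => Yk ω' * (S k ω' - S (k - 1) ω') | F (k - 1)]) ω) ^ 2 /
        (μ[fun ω' => Yk ω' * (S k ω' - S (k - 1) ω') ^ 2 | F (k - 1)]) ω
      ≤ (μ[Yk | F (k - 1)]) ω
        + 2 * ϑ k ω * (μ[fun ω' => Yk ω' * (S k ω' - S (k - 1) ω') | F (k - 1)]) ω
        + (ϑ k ω) ^ 2 * (μ[fun ω' => Yk ω' * (S k ω' - S (k - 1) ω') ^ 2 | F (k - 1)]) ω :=
      aux_quad_ineq _ _ _ _ h4.1 h4.2
    _ = (μ[fun ω => Yk ω * (1 + ϑ k ω * (S k ω - S (k - 1) ω)) ^ 2 | F (k - 1)]) ω := h3.symm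
    _ ≤ _ := h1

lemma aux_upper (μ : Measure Ω) [IsProbabilityMeasure μ] (F : Filtration ℕ m) (T k : ℕ)
    (hk1 : 1 ≤ k) (hkT : k ≤ T) (S : ℕ → Ω → ℝ)
    (hSadapt : ∀ j, StronglyMeasurable[F j] (S j))
    (Y' Yk : Ω → ℝ)
    (hYkm : StronglyMeasurable[F k] Yk)
    (hYb : ∀ᵐ ω ∂μ, 0 ≤ Yk ω ∧ Yk ω ≤ 1)
    (hΔ2 : MemLp (fun ω => S k ω - S (k - 1) ω) 2 μ)
    (hY'le : ∀ ϑ, AdmissibleDiscrete μ F S ϑ →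
      Y' ≤ᵐ[μ] μ[fun ω => (1 + gains S T (k - 1) ϑ ω) ^ 2 | F (k - 1)])
    (ψ : ℕ → Ω → ℝ) (hψ : AdmissibleDiscrete μ F S ψ)
    (hψopt : Yk =ᵐ[μ] μ[fun ω => (1 + gains S T k ψ ω) ^ 2 | F k]) :
    ∀ᵐ ω ∂μ, Y' ω ≤ (μ[Yk | F (k - 1)]) ω
      - ((μ[fun ω' => Yk ω' * (S k ω' - S (k - 1) ω') | F (k - 1)]) ω) ^ 2 /
        (μ[fun ω' => Yk ω' * (S k ω' - S (k - 1) ω') ^ 2 | F (k - 1)]) ω := by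
  classical
  set Δ : Ω → ℝ := fun ω => S k ω - S (k - 1) ω with hΔdef
  set A : Ω → ℝ := μ[Yk | F (k - 1)] with hAdef
  set B : Ω → ℝ := μ[fun ω' => Yk ω' * Δ ω' | F (k - 1)] with hBdef
  set C : Ω → ℝ := μ[fun ω' => Yk ω' * Δ ω' ^ 2 | F (k - 1)] with hCdef
  set ξ : Ω → ℝ := fun ω => -(B ω / C ω) with hξdef
  have hξm : StronglyMeasurable[F (k - 1)] ξ :=
    (measurable_neg.comp (stronglyMeasurable_condExp.measurable.div
      stronglyMeasurable_condExp.measurable)).stronglyMeasurable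
  have hΔm : StronglyMeasurable[F k] Δ :=
    (hSadapt k).sub ((hSadapt (k - 1)).mono (F.mono (Nat.sub_le k 1)))
  have hGψ2 : MemLp (fun ω => 1 + gains S T k ψ ω) 2 μ := gains_memℒp μ F S T k ψ hψ
  have hGψint : Integrable (fun ω => (1 + gains S T k ψ ω) ^ 2) μ := hGψ2.integrable_sq
  -- main step: for each truncation level n of ξ
  have key : ∀ n : ℕ, ∀ᵐ ω ∂μ, Y' ω ≤ A ω
      + 2 * (if |ξ ω| ≤ (n : ℝ) then ξ ω else 0) * B ω
      + (if |ξ ω| ≤ (n : ℝ) then ξ ω else 0) ^ 2 * C ω := by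
    intro n
    set ξn : Ω → ℝ := fun ω => if |ξ ω| ≤ (n : ℝ) then ξ ω else 0 with hξndef
    have hξnm : StronglyMeasurable[F (k - 1)] ξn := by
      refine Measurable.stronglyMeasurable (Measurable.ite ?_ hξm.measurable measurable_const)
      exact measurableSet_le (continuous_abs.measurable.comp hξm.measurable)
        (measurable_const : Measurable[F (k - 1)] _)
    have hξnbd : ∀ ω, |ξn ω| ≤ (n : ℝ) := by
      intro ω
      simp only [hξndef]
      split_ifs with h
      · exact h
      · simp only [abs_zero]; positivity
    have hξnΔ : MemLp (fun ω => ξn ω * Δ ω) 2 μ := by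
      have h1 : MemLp ξn ⊤ μ := memLp_top_of_bound
        ((hξnm.mono (F.le (k - 1))).aestronglyMeasurable) (n : ℝ)
        (Filter.Eventually.of_forall fun ω => by rw [Real.norm_eq_abs]; exact hξnbd ω)
      have h2 := hΔ2.smul (r := 2) h1
      apply h2.ae_eq
      filter_upwards with ω
      simp only [Pi.smul_apply, smul_eq_mul, Pi.mul_apply]
    set cn : Ω → ℝ := fun ω => 1 + ξn ω * Δ ω with hcndef
    have hcnm : StronglyMeasurable[F k] cn :=
      stronglyMeasurable_const.add ((hξnm.mono (F.mono (Nat.sub_le k 1))).mul hΔm)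
    have hcn2 : MemLp cn 2 μ := (memLp_const (1:ℝ)).add hξnΔ
    have hcnsqint : Integrable (fun ω => cn ω ^ 2) μ := hcn2.integrable_sq
    -- per inner truncation level i
    have step : ∀ i : ℕ, ∀ᵐ ω ∂μ, Y' ω ≤
        (A ω + 2 * ξn ω * B ω + ξn ω ^ 2 * C ω)
        + (μ[fun ω' => if |cn ω'| ≤ (i : ℝ) then 0 else cn ω' ^ 2 * (1 - Yk ω') | F (k - 1)]) ω := by
      intro i
      set dm : Ω → ℝ := fun ω => if |cn ω| ≤ (i : ℝ) then cn ω else 0 with hdmdef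
      have hsetm : MeasurableSet[F k] {ω | |cn ω| ≤ (i : ℝ)} :=
        measurableSet_le (continuous_abs.measurable.comp hcnm.measurable)
          (measurable_const : Measurable[F k] _)
      have hdmm : StronglyMeasurable[F k] dm :=
        (Measurable.ite hsetm hcnm.measurable measurable_const).stronglyMeasurable
      have hdmbd : ∀ ω, |dm ω| ≤ (i : ℝ) := by
        intro ω
        simp only [hdmdef]
        split_ifs with h
        · exact h
        · simp only [abs_zero]; positivity
      -- the strategy
      set ϑ : ℕ → Ω → ℝ := fun j ω =>
        if j = k then ξn ω else if k < j then dm ω * ψ j ω else 0 with hϑdef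
      have hϑadm : AdmissibleDiscrete μ F S ϑ := by
        constructor
        · intro j hj
          by_cases hjk : j = k
          · subst hjk
            simp only [hϑdef, if_pos rfl]
            exact hξnm
          · by_cases hkj : k < j
            · simp only [hϑdef, if_neg hjk, if_pos hkj]
              exact ((hdmm.mono (F.mono (by omega : k ≤ j - 1))).mul (hψ.1 j hj))
            · simp only [hϑdef, if_neg hjk, if_neg hkj]
              exact stronglyMeasurable_const
        · intro j
          by_cases hjk : j = k
          · subst hjk
            apply hξnΔ.ae_eq
            filter_upwards with ω
            simp only [hϑdef, if_pos rfl, hΔdef]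
          · by_cases hkj : k < j
            · have h1 : MemLp dm ⊤ μ := memLp_top_of_bound
                ((hdmm.mono (F.le k)).aestronglyMeasurable) (i : ℝ)
                (Filter.Eventually.of_forall fun ω => by rw [Real.norm_eq_abs]; exact hdmbd ω)
              have h2 := (hψ.2 j).smul (r := 2) h1
              apply h2.ae_eq
              filter_upwards with ω
              simp only [Pi.smul_apply, smul_eq_mul, Pi.mul_apply, hϑdef, if_neg hjk, if_pos hkj]
              ring
            · apply (memLp_const (0 : ℝ)).ae_eq
              filter_upwards with ω
              simp [hϑdef, if_neg hjk, if_neg hkj]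
      -- gains decomposition
      have hgain : ∀ ω, 1 + gains S T (k - 1) ϑ ω = cn ω + dm ω * gains S T k ψ ω := by
        intro ω
        rw [gains_decomp S T k hk1 hkT ϑ ω]
        have h1 : ϑ k ω = ξn ω := by simp [hϑdef]
        have h2 : gains S T k ϑ ω = dm ω * gains S T k ψ ω := by
          simp only [gains, Finset.mul_sum]
          apply Finset.sum_congr rfl
          intro j hj
          rw [Finset.mem_Ioc] at hj
          have : j ≠ k := by omega
          simp only [hϑdef, if_neg this, if_pos hj.1]
          ring
        rw [h1, h2, hcndef]
        ring
      -- conditional expectation at F k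
      set Im : Ω → ℝ := fun ω => if |cn ω| ≤ (i : ℝ) then cn ω ^ 2 else 0 with hImdef
      set Jm : Ω → ℝ := fun ω => if |cn ω| ≤ (i : ℝ) then 0 else cn ω ^ 2 with hJmdef
      have hImm : StronglyMeasurable[F k] Im := by
        refine Measurable.stronglyMeasurable (Measurable.ite hsetm ?_ measurable_const)
        have heq : (fun ω => cn ω ^ 2) = fun ω => cn ω * cn ω := by funext ω; ring
        rw [heq]; exact hcnm.measurable.mul hcnm.measurable
      have hJmm : StronglyMeasurable[F k] Jm := by
        refine Measurable.stronglyMeasurable (Measurable.ite hsetm measurable_const ?_)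
        have heq : (fun ω => cn ω ^ 2) = fun ω => cn ω * cn ω := by funext ω; ring
        rw [heq]; exact hcnm.measurable.mul hcnm.measurable
      have hJmint : Integrable Jm μ := by
        refine Integrable.mono' hcnsqint ((hJmm.mono (F.le k)).aestronglyMeasurable) ?_
        filter_upwards with ω
        simp only [Real.norm_eq_abs, hJmdef]
        split_ifs
        · simp only [abs_zero]; positivity
        · rw [abs_of_nonneg (sq_nonneg _)]
      have hQdecomp : (fun ω => (1 + gains S T (k - 1) ϑ ω) ^ 2)
          = (Im * fun ω => (1 + gains S T k ψ ω) ^ 2) + Jm := by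
        funext ω
        simp only [Pi.add_apply, Pi.mul_apply, hImdef, hJmdef]
        rw [hgain ω]
        simp only [hdmdef]
        split_ifs
        · ring
        · ring
      have hImgint : Integrable (Im * fun ω => (1 + gains S T k ψ ω) ^ 2) μ := by
        refine Integrable.mono' (hGψint.const_mul ((i : ℝ) ^ 2))
          (((hImm.mono (F.le k)).aestronglyMeasurable).mul hGψint.1) ?_
        filter_upwards with ω
        rw [Real.norm_eq_abs, Pi.mul_apply, abs_mul, abs_of_nonneg (sq_nonneg (1 + gains S T k ψ ω))]
        have hIm_le : |Im ω| ≤ (i : ℝ) ^ 2 := by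
          simp only [hImdef]
          split_ifs with h
          · rw [abs_of_nonneg (sq_nonneg _)]
            calc cn ω ^ 2 = |cn ω| ^ 2 := (sq_abs _).symm
              _ ≤ (i : ℝ) ^ 2 := by gcongr
          · simp only [abs_zero]; positivity
        exact mul_le_mul_of_nonneg_right hIm_le (sq_nonneg _)
      have hpull : μ[Im * fun ω => (1 + gains S T k ψ ω) ^ 2 | F k]
          =ᵐ[μ] Im * μ[fun ω => (1 + gains S T k ψ ω) ^ 2 | F k] :=
        condExp_mul_of_stronglyMeasurable_left hImm hImgint hGψint
      have hcondFk : μ[fun ω => (1 + gains S T (k - 1) ϑ ω) ^ 2 | F k]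
          =ᵐ[μ] fun ω => cn ω ^ 2 * Yk ω + (if |cn ω| ≤ (i : ℝ) then 0 else cn ω ^ 2 * (1 - Yk ω)) := by
        rw [hQdecomp]
        refine (condExp_add hImgint hJmint _).trans ?_
        have hJid : μ[Jm | F k] = Jm :=
          condExp_of_stronglyMeasurable (F.le k) hJmm hJmint
        rw [hJid]
        filter_upwards [hpull, hψopt] with ω h1 h2
        simp only [Pi.add_apply]
        rw [h1]
        simp only [Pi.mul_apply]
        rw [← h2]
        simp only [hImdef, hJmdef]
        split_ifs
        · ring
        · ring
      -- back to F (k-1)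
      have hrm_int : Integrable (fun ω => if |cn ω| ≤ (i : ℝ) then 0 else cn ω ^ 2 * (1 - Yk ω)) μ := by
        refine Integrable.mono' hcnsqint ?_ ?_
        · apply AEStronglyMeasurable.congr
            (f := fun ω => Jm ω * (1 - Yk ω))
          · exact ((hJmm.mono (F.le k)).aestronglyMeasurable).mul
              ((stronglyMeasurable_const.sub (hYkm.mono (F.le k))).aestronglyMeasurable)
          · filter_upwards with ω
            simp only [hJmdef]
            split_ifs
            · simp
            · rfl
        · filter_upwards [hYb] with ω ⟨h0, h1⟩
          rw [Real.norm_eq_abs]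
          split_ifs
          · simp only [abs_zero]; positivity
          · rw [abs_mul, abs_of_nonneg (sq_nonneg _), abs_of_nonneg (by linarith)]
            nlinarith [sq_nonneg (cn ω)]
      have hccYint : Integrable (fun ω => cn ω ^ 2 * Yk ω) μ := by
        refine Integrable.mono' hcnsqint (((hcnm.mono (F.le k)).aestronglyMeasurable.mul
          (hcnm.mono (F.le k)).aestronglyMeasurable).congr (Filter.Eventually.of_forall
            fun ω => by simp only [Pi.mul_apply]; ring) |>.mul
          (hYkm.mono (F.le k)).aestronglyMeasurable) ?_
        filter_upwards [hYb] with ω ⟨h0, h1⟩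
        rw [Real.norm_eq_abs, abs_mul, abs_of_nonneg (sq_nonneg _), abs_of_nonneg h0]
        exact mul_le_of_le_one_right (sq_nonneg _) h1
      have htower : μ[fun ω => (1 + gains S T (k - 1) ϑ ω) ^ 2 | F (k - 1)]
          =ᵐ[μ] μ[μ[fun ω => (1 + gains S T (k - 1) ϑ ω) ^ 2 | F k] | F (k - 1)] :=
        (condExp_condExp_of_le (F.mono (Nat.sub_le k 1)) (F.le k)).symm
      have hsplit : μ[μ[fun ω => (1 + gains S T (k - 1) ϑ ω) ^ 2 | F k] | F (k - 1)]
          =ᵐ[μ] μ[fun ω => cn ω ^ 2 * Yk ω | F (k - 1)]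
            + μ[fun ω => if |cn ω| ≤ (i : ℝ) then 0 else cn ω ^ 2 * (1 - Yk ω) | F (k - 1)] := by
        refine (condExp_congr_ae hcondFk).trans ?_
        exact condExp_add hccYint hrm_int _
      have hquad := aux_condExp_quad (F.le (k - 1)) (hYkm.mono (F.le k)).aestronglyMeasurable
        hYb hΔ2 hξnm hξnΔ
      have hccYeq : μ[fun ω => cn ω ^ 2 * Yk ω | F (k - 1)]
          =ᵐ[μ] fun ω => A ω + 2 * ξn ω * B ω + ξn ω ^ 2 * C ω := by
        refine (condExp_congr_ae ?_).trans hquad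
        filter_upwards with ω
        simp only [hcndef]
        ring
      have hY'le' := hY'le ϑ hϑadm
      filter_upwards [hY'le', htower, hsplit, hccYeq] with ω h1 h2 h3 h4
      calc Y' ω ≤ (μ[fun ω => (1 + gains S T (k - 1) ϑ ω) ^ 2 | F (k - 1)]) ω := h1
        _ = (μ[μ[fun ω => (1 + gains S T (k - 1) ϑ ω) ^ 2 | F k] | F (k - 1)]) ω := h2
        _ = (μ[fun ω => cn ω ^ 2 * Yk ω | F (k - 1)]) ω
            + (μ[fun ω' => if |cn ω'| ≤ (i : ℝ) then 0 else cn ω' ^ 2 * (1 - Yk ω') | F (k - 1)]) ω := h3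
        _ = (A ω + 2 * ξn ω * B ω + ξn ω ^ 2 * C ω)
            + (μ[fun ω' => if |cn ω'| ≤ (i : ℝ) then 0 else cn ω' ^ 2 * (1 - Yk ω') | F (k - 1)]) ω := by
            rw [h4]
    -- now send i → ∞
    set r : ℕ → Ω → ℝ := fun i ω => if |cn ω| ≤ (i : ℝ) then 0 else cn ω ^ 2 * (1 - Yk ω) with hrdef
    set R : ℕ → Ω → ℝ := fun i => μ[r i | F (k - 1)] with hRdef
    have hrint : ∀ i, Integrable (r i) μ := by
      intro i
      refine Integrable.mono' hcnsqint ?_ ?_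
      · have hmeas : StronglyMeasurable[F k] (r i) := by
          refine Measurable.stronglyMeasurable (Measurable.ite ?_ measurable_const ?_)
          · exact measurableSet_le (continuous_abs.measurable.comp hcnm.measurable)
              (measurable_const : Measurable[F k] _)
          · have heq : (fun ω => cn ω ^ 2 * (1 - Yk ω)) = fun ω => cn ω * cn ω * (1 - Yk ω) := by
              funext ω; ring
            rw [heq]
            exact (hcnm.measurable.mul hcnm.measurable).mul
              (measurable_const.sub hYkm.measurable)
        exact (hmeas.mono (F.le k)).aestronglyMeasurable
      · filter_upwards [hYb] with ω ⟨h0, h1⟩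
        rw [Real.norm_eq_abs, hrdef]
        simp only
        split_ifs
        · simp only [abs_zero]; positivity
        · rw [abs_mul, abs_of_nonneg (sq_nonneg _), abs_of_nonneg (by linarith)]
          nlinarith [sq_nonneg (cn ω)]
    have hrnn : ∀ i, 0 ≤ᵐ[μ] r i := by
      intro i
      filter_upwards [hYb] with ω ⟨h0, h1⟩
      simp only [hrdef]
      split_ifs
      · exact le_rfl
      · exact mul_nonneg (sq_nonneg _) (by linarith)
    have hRnn : ∀ i, 0 ≤ᵐ[μ] R i := fun i => condExp_nonneg (hrnn i)
    have hRm : ∀ i, StronglyMeasurable[F (k - 1)] (R i) := fun i => stronglyMeasurable_condExp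
    -- Z = inf of max(R i, 0)
    set Z : Ω → ℝ := fun ω => ⨅ i : ℕ, max (R i ω) 0 with hZdef
    have hZnn : ∀ ω, 0 ≤ Z ω := fun ω => le_ciInf fun i => le_max_right _ _
    have hZle : ∀ i ω, Z ω ≤ max (R i ω) 0 := by
      intro i ω
      exact ciInf_le ⟨0, by rintro x ⟨j, rfl⟩; exact le_max_right _ _⟩ i
    have hZmeas : Measurable Z := by
      apply Measurable.iInf
      intro i
      exact (((hRm i).mono (F.le (k - 1))).measurable.max measurable_const)
    have hZint : Integrable Z μ := by
      refine Integrable.mono' (integrable_condExp (f := r 0) (m := F (k - 1))).abs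
        hZmeas.aestronglyMeasurable ?_
      filter_upwards with ω
      rw [Real.norm_eq_abs, abs_of_nonneg (hZnn ω)]
      calc Z ω ≤ max (R 0 ω) 0 := hZle 0 ω
        _ ≤ |R 0 ω| := max_le (le_abs_self _) (abs_nonneg _)
    have hintr_tendsto : Filter.Tendsto (fun i => ∫ ω, r i ω ∂μ) Filter.atTop (nhds 0) := by
      have h0 : (0 : ℝ) = ∫ ω, (0 : ℝ) ∂μ := by simp
      rw [h0]
      apply MeasureTheory.tendsto_integral_of_dominated_convergence
        (bound := fun ω => cn ω ^ 2)
      · intro i; exact (hrint i).1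
      · exact hcnsqint
      · intro i
        filter_upwards [hYb] with ω ⟨h0', h1'⟩
        rw [Real.norm_eq_abs, hrdef]
        simp only
        split_ifs
        · simp only [abs_zero]; positivity
        · rw [abs_mul, abs_of_nonneg (sq_nonneg _), abs_of_nonneg (by linarith)]
          nlinarith [sq_nonneg (cn ω)]
      · filter_upwards with ω
        apply Filter.Tendsto.congr' _ tendsto_const_nhds
        rw [Filter.EventuallyEq, Filter.eventually_atTop]
        refine ⟨⌈|cn ω|⌉₊, fun i hi => ?_⟩
        have : |cn ω| ≤ (i : ℝ) := le_trans (Nat.le_ceil _) (by exact_mod_cast hi)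
        simp only [hrdef, if_pos this]
    have hintZ_le : ∀ i, ∫ ω, Z ω ∂μ ≤ ∫ ω, r i ω ∂μ := by
      intro i
      have h1 : ∫ ω, Z ω ∂μ ≤ ∫ ω, max (R i ω) 0 ∂μ := by
        apply integral_mono hZint ((integrable_condExp).pos_part) (fun ω => hZle i ω)
      have h2 : ∫ ω, max (R i ω) 0 ∂μ = ∫ ω, R i ω ∂μ := by
        apply integral_congr_ae
        filter_upwards [hRnn i] with ω hω
        exact max_eq_left hω
      have h3 : ∫ ω, R i ω ∂μ = ∫ ω, r i ω ∂μ := integral_condExp (F.le (k - 1))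
      exact (h1.trans_eq h2).trans_eq h3
    have hintZ : ∫ ω, Z ω ∂μ = 0 := by
      have hle0 : ∫ ω, Z ω ∂μ ≤ 0 := ge_of_tendsto' hintr_tendsto hintZ_le
      have hge0 : 0 ≤ ∫ ω, Z ω ∂μ := integral_nonneg hZnn
      linarith
    have hZ0 : Z =ᵐ[μ] 0 := by
      have := (integral_eq_zero_iff_of_nonneg hZnn hZint).mp hintZ
      exact this
    filter_upwards [ae_all_iff.mpr step, ae_all_iff.mpr hRnn, hZ0] with ω hstep hRnnω hZ0ω
    have hfin : Y' ω - (A ω + 2 * ξn ω * B ω + ξn ω ^ 2 * C ω) ≤ Z ω := by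
      apply le_ciInf
      intro i
      have := hstep i
      have h2 : R i ω = max (R i ω) 0 := (max_eq_left (hRnnω i)).symm
      calc Y' ω - (A ω + 2 * ξn ω * B ω + ξn ω ^ 2 * C ω) ≤ R i ω := by
            simp only [hRdef] at *
            linarith [hstep i]
        _ = max (R i ω) 0 := h2
    rw [hZ0ω] at hfin
    simp only [Pi.zero_apply] at hfin
    linarith
  -- combine over n
  have hcs := aux_CS (F.le (k - 1)) (hYkm.mono (F.le k)).aestronglyMeasurable hYb hΔ2
  filter_upwards [ae_all_iff.mpr key, hcs] with ω hkey hcsω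
  obtain ⟨n, hn⟩ := exists_nat_gt |ξ ω|
  have := hkey n
  rw [if_pos hn.le] at this
  calc Y' ω ≤ A ω + 2 * ξ ω * B ω + ξ ω ^ 2 * C ω := this
    _ = A ω + 2 * (-(B ω / C ω)) * B ω + (-(B ω / C ω)) ^ 2 * C ω := by rw [hξdef]
    _ = A ω - B ω ^ 2 / C ω := aux_quad_eq _ _ _ hcsω.1 hcsω.2

lemma zero_adm (μ : Measure Ω) [IsProbabilityMeasure μ] (F : Filtration ℕ m) (S : ℕ → Ω → ℝ) :
    AdmissibleDiscrete μ F S (fun _ _ => 0) := by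
  constructor
  · intro j _
    exact stronglyMeasurable_const
  · intro j
    apply (memLp_const (0 : ℝ)).ae_eq
    exact Filter.Eventually.of_forall fun ω => (zero_mul _).symm

end AuxMVH

/-- Section 5.2, recursion of Gugushvili / Černý–Kallsen in finite
discrete time.  `Y k` is the pure-investment value process
`Y_k = essinf_ϑ E[(1 + ∑_{j=k+1}^T ϑ_j Δ_j S)² | F_k]` (greatest a.e. lower bound over
admissible strategies, with existing optimizers and strictly positive values).
Conclusion: `Y` satisfies the backward recursion
`Y_{k-1} = E[Y_k|F_{k-1}] - (E[Y_k Δ_k S|F_{k-1}])² / E[Y_k (Δ_k S)²|F_{k-1}]`,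
with `Y_T = 1`. -/
theorem discrete_time_opportunity_recursion
    (μ : Measure Ω) [IsProbabilityMeasure μ]
    (F : Filtration ℕ m) (T : ℕ)
    (S : ℕ → Ω → ℝ)
    (hSadapt : ∀ k, StronglyMeasurable[F k] (S k))
    (hS2 : ∀ k, k ≤ T → MemLp (S k) 2 μ)
    (Y : ℕ → Ω → ℝ)
    (hYadapt : ∀ k, StronglyMeasurable[F k] (Y k))
    (hYle : ∀ k, k ≤ T → ∀ ϑ, AdmissibleDiscrete μ F S ϑ →
      Y k ≤ᵐ[μ] μ[fun ω => (1 + gains S T k ϑ ω) ^ 2 | F k])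
    (hYglb : ∀ k, k ≤ T → ∀ W : Ω → ℝ,
      (∀ ϑ, AdmissibleDiscrete μ F S ϑ →
        W ≤ᵐ[μ] μ[fun ω => (1 + gains S T k ϑ ω) ^ 2 | F k]) → W ≤ᵐ[μ] Y k)
    (hopt : ∀ k, k ≤ T → ∃ ϑ, AdmissibleDiscrete μ F S ϑ ∧
      Y k =ᵐ[μ] μ[fun ω => (1 + gains S T k ϑ ω) ^ 2 | F k])
    (hYpos : ∀ k, k ≤ T → ∀ᵐ ω ∂μ, 0 < Y k ω) :
    (∀ k, 1 ≤ k → k ≤ T →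
      Y (k - 1) =ᵐ[μ] fun ω =>
        (μ[Y k | F (k - 1)]) ω -
          ((μ[fun ω' => Y k ω' * (S k ω' - S (k - 1) ω') | F (k - 1)]) ω) ^ 2 /
            (μ[fun ω' => Y k ω' * (S k ω' - S (k - 1) ω') ^ 2 | F (k - 1)]) ω) ∧
    Y T =ᵐ[μ] fun _ => 1 := by
  have hYone : ∀ k, k ≤ T → Y k ≤ᵐ[μ] fun _ => (1 : ℝ) := by
    intro k hk
    have h := hYle k hk (fun _ _ => 0) (zero_adm μ F S)
    have hg : (fun ω => (1 + gains S T k (fun _ _ => (0 : ℝ)) ω) ^ 2) = fun _ => (1 : ℝ) := by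
      funext ω; simp [gains]
    rw [hg, condExp_const (F.le k)] at h
    exact h
  have hYb : ∀ k, k ≤ T → ∀ᵐ ω ∂μ, 0 ≤ Y k ω ∧ Y k ω ≤ 1 := by
    intro k hk
    filter_upwards [hYpos k hk, hYone k hk] with ω h1 h2
    exact ⟨h1.le, h2⟩
  constructor
  · intro k hk1 hkT
    have hkT' : k - 1 ≤ T := le_trans (Nat.sub_le k 1) hkT
    have hΔ2 : MemLp (fun ω => S k ω - S (k - 1) ω) 2 μ :=
      (hS2 k hkT).sub (hS2 (k - 1) hkT')
    obtain ⟨ψ, hψ, hψopt⟩ := hopt k hkT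
    have hup := aux_upper μ F T k hk1 hkT S hSadapt (Y (k - 1)) (Y k) (hYadapt k)
      (hYb k hkT) hΔ2 (fun ϑ hϑ => hYle (k - 1) hkT' ϑ hϑ) ψ hψ hψopt
    have hlo := hYglb (k - 1) hkT' (fun ω =>
        (μ[Y k | F (k - 1)]) ω -
          ((μ[fun ω' => Y k ω' * (S k ω' - S (k - 1) ω') | F (k - 1)]) ω) ^ 2 /
            (μ[fun ω' => Y k ω' * (S k ω' - S (k - 1) ω') ^ 2 | F (k - 1)]) ω)
      (fun ϑ hϑ => aux_lower μ F T k hk1 hkT S hSadapt (Y k)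
        ((hYadapt k).mono (F.le k)).aestronglyMeasurable (hYb k hkT) hΔ2
        (fun ϑ' hϑ' => hYle k hkT ϑ' hϑ') ϑ hϑ)
    filter_upwards [hup, hlo] with ω h1 h2
    exact le_antisymm h1 h2
  · have h1 := hYone T le_rfl
    have h2 : (fun _ => (1 : ℝ)) ≤ᵐ[μ] Y T := by
      apply hYglb T le_rfl
      intro ϑ hϑ
      have hg : (fun ω => (1 + gains S T T ϑ ω) ^ 2) = fun _ => (1 : ℝ) := by
        funext ω; simp [gains]
      rw [hg, condExp_const (F.le T)]
    filter_upwards [h1, h2] with ω a b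
    exact le_antisymm a b
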